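/- Let γ > 0, λ̃_1 λ̃_2 > 0, and λ_1 > 0 > λ_2. Then the derivative of ε ↦ λ(ε,γ) is strictly positive for all ε > 0 (where the denominator is nonzero), λ(0,γ) = λ_2 < 0, and λ(ε,γ) → λ_1 > 0 as ε → ∞; hence by continuity there exists ε̃ > 0 with λ(ε̃,γ) = 0. -/

import Mathlib

open Filter

theorem stmt11 (l1 l2 t1 t2 γ : ℝ) (ht : t1 * t2 > 0) (hγ : γ > 0)
    (h1 : l1 > 0) (h2 : 0 > l2)
    (hden : ∀ ε : ℝ, 0 ≤ ε → 0 < t2 * ε ^ 2 + γ * (t1 + t2) * ε + t1)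
    (lam : ℝ → ℝ)
    (hlam : ∀ ε, lam ε =
      (l1 * t2 * ε ^ 2 + γ * (l1 * t2 + l2 * t1) * ε + l2 * t1)
        / (t2 * ε ^ 2 + γ * (t1 + t2) * ε + t1)) :
    (∀ ε : ℝ, 0 < ε → 0 < deriv lam ε) ∧
    lam 0 = l2 ∧ l2 < 0 ∧
    Tendsto lam atTop (nhds l1) ∧ 0 < l1 ∧
    ∃ e : ℝ, 0 < e ∧ lam e = 0 := by
  have ht1 : 0 < t1 := by have := hden 0 le_rfl; nlinarith
  have ht2 : 0 < t2 := by nlinarith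
  have hlamf : lam = fun ε =>
      (l1 * t2 * ε ^ 2 + γ * (l1 * t2 + l2 * t1) * ε + l2 * t1)
        / (t2 * ε ^ 2 + γ * (t1 + t2) * ε + t1) := funext hlam
  -- derivative
  have hderiv : ∀ ε : ℝ, 0 ≤ ε → HasDerivAt lam
      ((t1 * t2 * (l1 - l2) * (γ * ε ^ 2 + 2 * ε + γ))
        / (t2 * ε ^ 2 + γ * (t1 + t2) * ε + t1) ^ 2) ε := by
    intro ε hε
    have hD := hden ε hε
    have hN : HasDerivAt (fun x : ℝ => l1 * t2 * x ^ 2 + γ * (l1 * t2 + l2 * t1) * x + l2 * t1)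
        (2 * (l1 * t2) * ε + γ * (l1 * t2 + l2 * t1)) ε := by
      have h := (((hasDerivAt_pow 2 ε).const_mul (l1 * t2)).add
        ((hasDerivAt_id ε).const_mul (γ * (l1 * t2 + l2 * t1)))).add_const (l2 * t1)
      convert h using 1
      rfl
      rfl
      rfl
      simp only [show (2:ℕ) - 1 = 1 from rfl, pow_one, Nat.cast_ofNat, mul_one]; ring
    have hDd : HasDerivAt (fun x : ℝ => t2 * x ^ 2 + γ * (t1 + t2) * x + t1)
        (2 * t2 * ε + γ * (t1 + t2)) ε := by
      have h := (((hasDerivAt_pow 2 ε).const_mul t2).add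
        ((hasDerivAt_id ε).const_mul (γ * (t1 + t2)))).add_const t1
      convert h using 1
      rfl
      rfl
      rfl
      simp only [show (2:ℕ) - 1 = 1 from rfl, pow_one, Nat.cast_ofNat, mul_one]; ring
    have h := hN.div hDd (ne_of_gt hD)
    rw [hlamf]
    convert h using 1
    rfl
    rfl
    rfl
    ring
  have hlam0 : lam 0 = l2 := by rw [hlam 0]; field_simp; ring
  have htend : Tendsto lam atTop (nhds l1) := by
    have key : Tendsto (fun ε : ℝ =>
        (l1 * t2 + γ * (l1 * t2 + l2 * t1) / ε + l2 * t1 / ε ^ 2)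
          / (t2 + γ * (t1 + t2) / ε + t1 / ε ^ 2)) atTop (nhds ((l1 * t2 + 0 + 0) / (t2 + 0 + 0))) := by
      have hnum : Tendsto (fun ε : ℝ => l1 * t2 + γ * (l1 * t2 + l2 * t1) / ε + l2 * t1 / ε ^ 2)
          atTop (nhds (l1 * t2 + 0 + 0)) :=
        (tendsto_const_nhds.add (tendsto_const_nhds.div_atTop tendsto_id)).add
          (tendsto_const_nhds.div_atTop (tendsto_pow_atTop two_ne_zero))
      have hden' : Tendsto (fun ε : ℝ => t2 + γ * (t1 + t2) / ε + t1 / ε ^ 2)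
          atTop (nhds (t2 + 0 + 0)) :=
        (tendsto_const_nhds.add (tendsto_const_nhds.div_atTop tendsto_id)).add
          (tendsto_const_nhds.div_atTop (tendsto_pow_atTop two_ne_zero))
      exact hnum.div hden' (by simpa using ne_of_gt ht2)
    have hval : (l1 * t2 + 0 + 0) / (t2 + 0 + 0) = l1 := by
      field_simp
      ring
    rw [hval] at key
    refine key.congr' ?_
    filter_upwards [eventually_gt_atTop (0:ℝ)] with ε hε
    rw [hlam ε]
    have hD := ne_of_gt (hden ε hε.le)
    have hε' := ne_of_gt hε
    field_simp
  have hcont : ContinuousOn lam (Set.Ici 0) := fun x hx =>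
    ((hderiv x hx).continuousAt).continuousWithinAt
  refine ⟨?_, hlam0, h2, htend, h1, ?_⟩
  · intro ε hε
    rw [(hderiv ε hε.le).deriv]
    have hD := hden ε hε.le
    have h3 : 0 < γ * ε ^ 2 + 2 * ε + γ := by nlinarith
    have hl : 0 < l1 - l2 := by linarith
    exact div_pos (mul_pos (mul_pos (mul_pos ht1 ht2) hl) h3) (pow_pos hD 2)
  · -- find e0 with lam e0 > 0 via the limit
    have hev : ∀ᶠ ε in atTop, lam ε > l1 / 2 :=
      htend.eventually (eventually_gt_nhds (by linarith))
    obtain ⟨e0, he0⟩ := (hev.and (eventually_gt_atTop 0)).exists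
    obtain ⟨hle0, he0pos⟩ := he0
    have h01 : (0:ℝ) ≤ e0 := he0pos.le
    have hcont' : ContinuousOn lam (Set.Icc 0 e0) :=
      hcont.mono (fun x hx => hx.1)
    have hiv := intermediate_value_Ioo h01 hcont'
    have hmem : (0:ℝ) ∈ Set.Ioo (lam 0) (lam e0) := by
      constructor
      · rw [hlam0]; linarith
      · linarith
    obtain ⟨e, he, hee⟩ := hiv hmem
    exact ⟨e, he.1, hee⟩
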